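/- Let G be a graph on vertex set V(G) = {v₁,…,vₙ} and w(G) its whiskered graph. Then the maximal independent sets of w(G) all have cardinality n; explicitly, the maximal independent sets of w(G) are exactly the sets A ∪ {w_i : v_i ∉ A} for A an independent set of G. In particular the independence complex of w(G) is pure of dimension n − 1 and its facets are in bijection with the independent sets of G. -/

import Mathlib

open Finset

/-- Let `G` be a graph on vertex set `V = {v₁,…,vₙ}` and `w(G)` its whiskered graph,
with vertices `V ⊕ V` (left = original vertices, right = whiskers), where `inl u ~ inl v`
iff `G.Adj u v` and `inl u ~ inr u`. A set `S` is a maximal independent set of `w(G)`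
iff `S = A.image inl ∪ Aᶜ.image inr` for an independent set `A` of `G`, and then
`|S| = n`; in particular the independence complex of `w(G)` is pure of dimension `n − 1`
and its facets are in bijection with the independent sets of `G`. -/
theorem stmt17 {V : Type*} [Fintype V] [DecidableEq V] (n : ℕ)
    (hn : Fintype.card V = n)
    (G : SimpleGraph V) (W : SimpleGraph (V ⊕ V))
    (hW : ∀ x y, W.Adj x y ↔
      ((∃ u v, x = Sum.inl u ∧ y = Sum.inl v ∧ G.Adj u v) ∨
        (∃ u, x = Sum.inl u ∧ y = Sum.inr u) ∨
        (∃ u, x = Sum.inr u ∧ y = Sum.inl u))) :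
    ∀ S : Finset (V ⊕ V),
      ((∀ a ∈ S, ∀ b ∈ S, ¬ W.Adj a b) ∧
          ∀ T : Finset (V ⊕ V), (∀ a ∈ T, ∀ b ∈ T, ¬ W.Adj a b) → S ⊆ T → T = S) ↔
        ((∃ A : Finset V, (∀ u ∈ A, ∀ v ∈ A, ¬ G.Adj u v) ∧
            S = A.image Sum.inl ∪ Aᶜ.image Sum.inr) ∧ S.card = n) := by
  have hcard : ∀ A : Finset V,
      (A.image Sum.inl ∪ Aᶜ.image (Sum.inr : V → V ⊕ V)).card = n := by
    intro A
    rw [card_union_of_disjoint (by simp [disjoint_left]),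
      card_image_of_injective _ Sum.inl_injective,
      card_image_of_injective _ Sum.inr_injective, card_add_card_compl, hn]
  intro S
  constructor
  · rintro ⟨hind, hmax⟩
    set A := univ.filter (fun u => Sum.inl u ∈ S) with hA
    have hAmem : ∀ u, u ∈ A ↔ Sum.inl u ∈ S := by
      intro u; simp [hA]
    have hAind : ∀ u ∈ A, ∀ v ∈ A, ¬ G.Adj u v := by
      intro u hu v hv h
      exact hind _ ((hAmem u).1 hu) _ ((hAmem v).1 hv)
        ((hW _ _).2 (Or.inl ⟨u, v, rfl, rfl, h⟩))
    have hS : S = A.image Sum.inl ∪ Aᶜ.image Sum.inr := by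
      ext x
      simp only [mem_union, mem_image, mem_compl, hAmem]
      constructor
      · intro hx
        match x with
        | Sum.inl u => exact Or.inl ⟨u, hx, rfl⟩
        | Sum.inr u =>
          refine Or.inr ⟨u, fun hu => ?_, rfl⟩
          exact hind _ hu _ hx ((hW _ _).2 (Or.inr (Or.inl ⟨u, rfl, rfl⟩)))
      · rintro (⟨u, hu, rfl⟩ | ⟨u, hu, rfl⟩)
        · exact hu
        · by_contra hnot
          have hT : ∀ a ∈ insert (Sum.inr u) S, ∀ b ∈ insert (Sum.inr u) S,
              ¬ W.Adj a b := by
            intro a ha b hb hab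
            rw [mem_insert] at ha hb
            rcases ha with rfl | ha
            · rcases hb with rfl | hb
              · exact W.loopless.irrefl _ hab
              · rcases (hW _ _).1 hab with ⟨u', v', h1, _, _⟩ | ⟨u', h1, _⟩ |
                  ⟨u', h1, h2⟩
                · exact nomatch h1
                · exact nomatch h1
                · obtain rfl := Sum.inr.inj h1
                  exact hu (h2 ▸ hb)
            · rcases hb with rfl | hb
              · rcases (hW _ _).1 hab with ⟨u', v', _, h2, _⟩ | ⟨u', h1, h2⟩ |
                  ⟨u', _, h2⟩
                · exact nomatch h2
                · obtain rfl := Sum.inr.inj h2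
                  exact hu (h1 ▸ ha)
                · exact nomatch h2
              · exact hind _ ha _ hb hab
          have := hmax _ hT (subset_insert _ _)
          exact hnot (this ▸ mem_insert_self _ _)
    exact ⟨⟨A, hAind, hS⟩, hS ▸ hcard A⟩
  · rintro ⟨⟨A, hAind, rfl⟩, -⟩
    have hmem : ∀ x, x ∈ A.image Sum.inl ∪ Aᶜ.image (Sum.inr : V → V ⊕ V) ↔
        (∃ u ∈ A, x = Sum.inl u) ∨ (∃ u, u ∉ A ∧ x = Sum.inr u) := by
      intro x
      simp only [mem_union, mem_image, mem_compl]
      constructor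
      · rintro (⟨u, hu, rfl⟩ | ⟨u, hu, rfl⟩)
        · exact Or.inl ⟨u, hu, rfl⟩
        · exact Or.inr ⟨u, hu, rfl⟩
      · rintro (⟨u, hu, rfl⟩ | ⟨u, hu, rfl⟩)
        · exact Or.inl ⟨u, hu, rfl⟩
        · exact Or.inr ⟨u, hu, rfl⟩
    constructor
    · intro a ha b hb hab
      rw [hmem] at ha hb
      rcases (hW _ _).1 hab with ⟨u, v, rfl, rfl, huv⟩ | ⟨u, rfl, rfl⟩ |
        ⟨u, rfl, rfl⟩
      · rcases ha with ⟨u', hu', h⟩ | ⟨u', _, h⟩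
        · obtain rfl := Sum.inl.inj h
          rcases hb with ⟨v', hv', h'⟩ | ⟨v', _, h'⟩
          · obtain rfl := Sum.inl.inj h'
            exact hAind _ hu' _ hv' huv
          · exact nomatch h'
        · exact nomatch h
      · rcases ha with ⟨u', hu', h⟩ | ⟨u', _, h⟩
        · obtain rfl := Sum.inl.inj h
          rcases hb with ⟨v', _, h'⟩ | ⟨v', hv', h'⟩
          · exact nomatch h'
          · obtain rfl := Sum.inr.inj h'
            exact hv' hu'
        · exact nomatch h
      · rcases ha with ⟨u', _, h⟩ | ⟨u', hu', h⟩
        · exact nomatch h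
        · obtain rfl := Sum.inr.inj h
          rcases hb with ⟨v', hv', h'⟩ | ⟨v', _, h'⟩
          · obtain rfl := Sum.inl.inj h'
            exact hu' hv'
          · exact nomatch h'
    · intro T hT hST
      apply Subset.antisymm _ hST
      intro x hx
      rw [hmem]
      match x with
      | Sum.inl u =>
        refine Or.inl ⟨u, ?_, rfl⟩
        by_contra hu
        have h1 : Sum.inr u ∈ T := hST ((hmem _).2 (Or.inr ⟨u, hu, rfl⟩))
        exact hT _ hx _ h1 ((hW _ _).2 (Or.inr (Or.inl ⟨u, rfl, rfl⟩)))
      | Sum.inr u =>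
        refine Or.inr ⟨u, ?_, rfl⟩
        intro hu
        have h1 : Sum.inl u ∈ T := hST ((hmem _).2 (Or.inl ⟨u, hu, rfl⟩))
        exact hT _ hx _ h1 ((hW _ _).2 (Or.inr (Or.inr ⟨u, rfl, rfl⟩)))
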